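/- Gaussian stability under normal distortion (tail case): Let μ ∈ ℝ, σ > 0, p₀ ∈ (0,1), γ ∈ (0,1]. Let F̄(x) = 1 − Φ((x−μ)/σ) be the tail (survival) function of a Gaussian with mean μ and standard deviation σ. Then for all x ∈ ℝ, w_{p₀,γ}(F̄(x)) = 1 − Φ((x − μ̃)/σ̂), where μ̃ = μ + σ(γ⁻¹ − 1)Φ⁻¹(p₀) and σ̂ = σ/γ. That is, the distorted tail function is the tail function of a Gaussian with mean μ̃ and standard deviation σ̂. -/
import Mathlib


open Real MeasureTheory ProbabilityTheory Set Filter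

/-- Standard normal CDF. -/
noncomputable def Phi (x : ℝ) : ℝ :=
  ∫ t in Set.Iic x, Real.exp (-t ^ 2 / 2) / Real.sqrt (2 * Real.pi)

/-- Standard normal quantile function (inverse of `Phi`). -/
noncomputable def PhiInv : ℝ → ℝ := Function.invFun Phi

/-- Standard normal density. -/
noncomputable def ndens (x : ℝ) : ℝ :=
  Real.exp (-x ^ 2 / 2) / Real.sqrt (2 * Real.pi)

/-- Normal distortion function. -/
noncomputable def wdist (p₀ γ p : ℝ) : ℝ :=
  Phi (γ * PhiInv p + (1 - γ) * PhiInv p₀)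

lemma ndens_pos (x : ℝ) : 0 < ndens x := by
  unfold ndens
  positivity

lemma ndens_int : Integrable ndens := by
  have h := integrable_exp_neg_mul_sq (by norm_num : (0:ℝ) < 1/2)
  have : ndens = fun x => Real.exp (-(1/2) * x ^ 2) * (Real.sqrt (2 * Real.pi))⁻¹ := by
    funext x; unfold ndens; rw [div_eq_mul_inv]; ring_nf
  rw [this]
  exact h.mul_const _

lemma ndens_total : ∫ x, ndens x = 1 := by
  have h := integral_gaussian (1/2)
  have h2 : ∫ x, ndens x = (∫ x : ℝ, Real.exp (-(1/2) * x ^ 2)) * (Real.sqrt (2 * Real.pi))⁻¹ := by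
    rw [← integral_mul_const]
    congr 1; funext x; unfold ndens; rw [div_eq_mul_inv]; ring_nf
  rw [h2, h]
  rw [show Real.pi / (1/2) = 2 * Real.pi by ring]
  rw [mul_inv_cancel₀ (by positivity)]

lemma Phi_eq (x : ℝ) : Phi x = ∫ t in Set.Iic x, ndens t := rfl

lemma Phi_strictMono : StrictMono Phi := by
  intro a b hab
  have hsplit : Phi a + ∫ t in Set.Ioc a b, ndens t = Phi b := by
    rw [Phi_eq, Phi_eq, ← setIntegral_union (Iic_disjoint_Ioc le_rfl) measurableSet_Ioc
      ndens_int.integrableOn ndens_int.integrableOn, Iic_union_Ioc_eq_Iic hab.le]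
  have hpos : 0 < ∫ t in Set.Ioc a b, ndens t := by
    rw [setIntegral_pos_iff_support_of_nonneg_ae]
    · have : Function.support ndens ∩ Set.Ioc a b = Set.Ioc a b := by
        rw [Set.inter_eq_right]
        intro x _; exact (ndens_pos x).ne'
      rw [this]
      simpa using hab
    · filter_upwards with x using (ndens_pos x).le
    · exact ndens_int.integrableOn
  linarith

lemma Phi_neg (x : ℝ) : Phi (-x) = 1 - Phi x := by
  have h1 : Phi (-x) = ∫ t in Set.Ioi x, ndens t := by
    rw [Phi_eq, ← integral_comp_neg_Ioi]
    congr 1; funext t; unfold ndens; ring_nf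
  have h2 : Phi x + Phi (-x) = 1 := by
    rw [Phi_eq, h1,
      intervalIntegral.integral_Iic_add_Ioi ndens_int.integrableOn ndens_int.integrableOn,
      ndens_total]
  linarith

lemma PhiInv_Phi (x : ℝ) : PhiInv (Phi x) = x :=
  Function.leftInverse_invFun Phi_strictMono.injective x

theorem stmt8 (μ σ p₀ γ : ℝ) (hσ : 0 < σ)
    (hp₀ : p₀ ∈ Set.Ioo (0:ℝ) 1) (hγ : γ ∈ Set.Ioc (0:ℝ) 1) :
    ∀ x : ℝ,
      wdist p₀ γ (1 - Phi ((x - μ) / σ)) =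
        1 - Phi ((x - (μ + σ * (γ⁻¹ - 1) * PhiInv p₀)) / (σ / γ)) := by
  intro x
  rw [← Phi_neg, ← Phi_neg]
  unfold wdist
  rw [PhiInv_Phi]
  have hγ0 : γ ≠ 0 := hγ.1.ne'
  congr 1
  field_simp
  ring
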